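/- Let Z₁(λ), Z₂(λ) be differentiable families of 2n×2n symplectic matrices with Ψ(Zᵢ(λ)) := Jᵀ Zᵢ'(λ) Zᵢ(λ)⁻¹. Then Ψ(Z₂(λ)⁻¹ Z₁(λ)) = Z₂(λ)ᵀ (Ψ(Z₁(λ)) − Ψ(Z₂(λ))) Z₂(λ). -/

import Mathlib

open Matrix
noncomputable section

/-- The standard symplectic matrix `J = [[0, I], [-I, 0]]`. -/
def Jmat (k : Type*) [Fintype k] [DecidableEq k] : Matrix (k ⊕ k) (k ⊕ k) ℝ :=
  fromBlocks 0 1 (-1) 0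

/-- A matrix `S` is symplectic if `Sᵀ J S = J`. -/
def IsSymplectic {k : Type*} [Fintype k] [DecidableEq k]
    (S : Matrix (k ⊕ k) (k ⊕ k) ℝ) : Prop :=
  Sᵀ * Jmat k * S = Jmat k

/-- `S'` is the (entrywise) derivative family of the matrix family `S`. -/
def HasMatDeriv {k m : Type*} (S S' : ℝ → Matrix k m ℝ) : Prop :=
  ∀ (l : ℝ) (i : k) (j : m), HasDerivAt (fun t => S t i j) (S' l i j) l

/-- `Ψ(S(λ)) = Jᵀ S'(λ) S(λ)⁻¹`, where `S'` is a derivative family of `S`. -/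
def Psi {k : Type*} [Fintype k] [DecidableEq k]
    (S S' : ℝ → Matrix (k ⊕ k) (k ⊕ k) ℝ) (l : ℝ) : Matrix (k ⊕ k) (k ⊕ k) ℝ :=
  (Jmat k)ᵀ * S' l * (S l)⁻¹

section Aux

variable {k : Type*} [Fintype k] [DecidableEq k]

lemma JT : (Jmat k)ᵀ = -(Jmat k) := by
  simp only [Jmat, fromBlocks_transpose, Matrix.fromBlocks_neg]
  simp

lemma JJ : Jmat k * Jmat k = -1 := by
  simp only [Jmat, fromBlocks_multiply, Matrix.fromBlocks_neg, ← fromBlocks_one]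
  simp

lemma JTJ : (Jmat k)ᵀ * Jmat k = 1 := by
  rw [JT, neg_mul, JJ, neg_neg]

lemma JJT : Jmat k * (Jmat k)ᵀ = 1 := by
  rw [JT, mul_neg, JJ, neg_neg]

lemma sympl_left_inv {S : Matrix (k ⊕ k) (k ⊕ k) ℝ} (h : IsSymplectic S) :
    (Jmat k)ᵀ * Sᵀ * Jmat k * S = 1 := by
  rw [mul_assoc, mul_assoc, ← mul_assoc Sᵀ, h, JTJ]

lemma sympl_inv {S : Matrix (k ⊕ k) (k ⊕ k) ℝ} (h : IsSymplectic S) :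
    S⁻¹ = (Jmat k)ᵀ * Sᵀ * Jmat k :=
  Matrix.inv_eq_left_inv (sympl_left_inv h)

lemma sympl_right_inv {S : Matrix (k ⊕ k) (k ⊕ k) ℝ} (h : IsSymplectic S) :
    S * ((Jmat k)ᵀ * Sᵀ * Jmat k) = 1 :=
  mul_eq_one_comm.mp (sympl_left_inv h)

lemma HasMatDeriv.matmul {k m p : Type*} [Fintype m]
    {A A' : ℝ → Matrix k m ℝ} {B B' : ℝ → Matrix m p ℝ}
    (hA : HasMatDeriv A A') (hB : HasMatDeriv B B') :
    HasMatDeriv (fun l => A l * B l) (fun l => A' l * B l + A l * B' l) := by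
  intro l i j
  have h : HasDerivAt (fun t => ∑ x, A t i x * B t x j)
      (∑ x, (A' l i x * B l x j + A l i x * B' l x j)) l :=
    HasDerivAt.fun_sum fun x _ => (hA l i x).mul (hB l x j)
  simpa [Matrix.mul_apply, Matrix.add_apply, Finset.sum_add_distrib] using h

lemma hasMatDeriv_const {k m : Type*} (C : Matrix k m ℝ) :
    HasMatDeriv (fun _ => C) (fun _ => 0) := fun l i j => by
  simpa using hasDerivAt_const l (C i j)

lemma HasMatDeriv.matT {k m : Type*} {S S' : ℝ → Matrix k m ℝ}
    (h : HasMatDeriv S S') : HasMatDeriv (fun l => (S l)ᵀ) (fun l => (S' l)ᵀ) :=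
  fun l i j => h l j i

lemma hasMatDeriv_unique {k m : Type*} {S S' S'' : ℝ → Matrix k m ℝ}
    (h1 : HasMatDeriv S S') (h2 : HasMatDeriv S S'') : S' = S'' := by
  funext l; ext i j; exact (h1 l i j).unique (h2 l i j)

lemma HasMatDeriv.constMul {k m p : Type*} [Fintype m] (C : Matrix k m ℝ)
    {B B' : ℝ → Matrix m p ℝ} (hB : HasMatDeriv B B') :
    HasMatDeriv (fun l => C * B l) (fun l => C * B' l) := by
  have := (hasMatDeriv_const C).matmul hB
  simpa using this

lemma HasMatDeriv.mulConst {k m p : Type*} [Fintype m] (C : Matrix m p ℝ)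
    {B B' : ℝ → Matrix k m ℝ} (hB : HasMatDeriv B B') :
    HasMatDeriv (fun l => B l * C) (fun l => B' l * C) := by
  have := hB.matmul (hasMatDeriv_const C)
  simpa using this

lemma key {m : Type*} [Fintype m] [DecidableEq m] (J A A' B B' : Matrix m m ℝ)
    (hJT : Jᵀ = -J) (hJJ : J * J = -1)
    (hA : A * (Jᵀ * Aᵀ * J) = 1) (hB : Jᵀ * Bᵀ * J * B = 1)
    (hD : B'ᵀ * J * B + Bᵀ * J * B' = 0) :
    Jᵀ * (Jᵀ * B'ᵀ * J * A + Jᵀ * Bᵀ * J * A') * (Jᵀ * Aᵀ * J * B)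
      = Bᵀ * (Jᵀ * A' * (Jᵀ * Aᵀ * J) - Jᵀ * B' * (Jᵀ * Bᵀ * J)) * B := by
  have hD' : B'ᵀ * (J * B) = -(Bᵀ * (J * B')) := by
    rw [← Matrix.mul_assoc, ← Matrix.mul_assoc]
    exact eq_neg_of_add_eq_zero_left hD
  have rA : ∀ X : Matrix m m ℝ, A * (Jᵀ * (Aᵀ * (J * X))) = X := fun X => by
    have h := congrArg (fun M => M * X) hA
    simpa [Matrix.mul_assoc] using h
  have rB : Jᵀ * (Bᵀ * (J * B)) = 1 := by
    simpa [Matrix.mul_assoc] using hB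
  have rJJ : ∀ X : Matrix m m ℝ, Jᵀ * (Jᵀ * X) = -X := fun X => by
    rw [hJT]
    simp only [neg_mul, Matrix.mul_neg, Matrix.neg_mul, neg_neg]
    rw [← Matrix.mul_assoc, hJJ, neg_mul, one_mul]
  simp only [Matrix.mul_assoc, Matrix.mul_add, Matrix.add_mul, Matrix.mul_sub,
    Matrix.sub_mul]
  rw [rA B, rB, mul_one, hD', rJJ, rJJ]
  simp only [hJT, Matrix.neg_mul, Matrix.mul_neg, neg_neg]
  abel

end Aux

/-- `Ψ(Z₂(λ)⁻¹ Z₁(λ)) = Z₂(λ)ᵀ (Ψ(Z₁(λ)) − Ψ(Z₂(λ))) Z₂(λ)`. -/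
theorem statement5 (n : ℕ)
    (Z₁ Z₁' Z₂ Z₂' W' : ℝ → Matrix (Fin n ⊕ Fin n) (Fin n ⊕ Fin n) ℝ)
    (hZ₁ : ∀ l, IsSymplectic (Z₁ l)) (hZ₂ : ∀ l, IsSymplectic (Z₂ l))
    (hd₁ : HasMatDeriv Z₁ Z₁') (hd₂ : HasMatDeriv Z₂ Z₂')
    (hdW : HasMatDeriv (fun l => (Z₂ l)⁻¹ * Z₁ l) W') :
    ∀ l, Psi (fun t => (Z₂ t)⁻¹ * Z₁ t) W' l
        = (Z₂ l)ᵀ * (Psi Z₁ Z₁' l - Psi Z₂ Z₂' l) * Z₂ l := by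
  set J : Matrix (Fin n ⊕ Fin n) (Fin n ⊕ Fin n) ℝ := Jmat (Fin n) with hJdef
  -- derivative of the symplectic relation for Z₂
  have h1 : HasMatDeriv (fun t => (Z₂ t)ᵀ * J * Z₂ t)
      (fun t => ((Z₂' t)ᵀ * J * Z₂ t + (Z₂ t)ᵀ * J * Z₂' t)) := by
    have := ((hd₂.matT.mulConst J).matmul hd₂)
    simpa using this
  have h2 : HasMatDeriv (fun t => (Z₂ t)ᵀ * J * Z₂ t)
      (fun _ => (0 : Matrix (Fin n ⊕ Fin n) (Fin n ⊕ Fin n) ℝ)) := by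
    rw [show (fun t => (Z₂ t)ᵀ * J * Z₂ t) = fun _ => J from funext fun t => hZ₂ t]
    exact hasMatDeriv_const J
  have hD0 := hasMatDeriv_unique h1 h2
  -- explicit derivative of W
  have hWalt : (fun t => (Z₂ t)⁻¹ * Z₁ t)
      = (fun t => (Jᵀ * (Z₂ t)ᵀ * J) * Z₁ t) :=
    funext fun t => by rw [sympl_inv (hZ₂ t)]
  have hVd : HasMatDeriv (fun t => (Jᵀ * (Z₂ t)ᵀ * J) * Z₁ t)
      (fun t => ((Jᵀ * (Z₂' t)ᵀ * J) * Z₁ t + (Jᵀ * (Z₂ t)ᵀ * J) * Z₁' t)) :=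
    ((hd₂.matT.constMul Jᵀ).mulConst J).matmul hd₁
  have hW' : W' = fun t => ((Jᵀ * (Z₂' t)ᵀ * J) * Z₁ t + (Jᵀ * (Z₂ t)ᵀ * J) * Z₁' t) :=
    hasMatDeriv_unique (hWalt ▸ hdW) hVd
  intro l
  have hWinv : ((Z₂ l)⁻¹ * Z₁ l)⁻¹ = Jᵀ * (Z₁ l)ᵀ * J * Z₂ l := by
    rw [Matrix.mul_inv_rev,
      Matrix.nonsing_inv_nonsing_inv _ (Matrix.isUnit_det_of_left_inverse (sympl_left_inv (hZ₂ l))),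
      sympl_inv (hZ₁ l)]
  have hDl := congrFun hD0 l
  have hW'l := congrFun hW' l
  simp only [Psi, ← hJdef]
  rw [hWinv, hW'l, sympl_inv (hZ₁ l), sympl_inv (hZ₂ l)]
  exact key J (Z₁ l) (Z₁' l) (Z₂ l) (Z₂' l) (by rw [JT]) JJ
    (sympl_right_inv (hZ₁ l)) (sympl_left_inv (hZ₂ l)) hDl
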